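/- Let G be a finite group and g ∈ G. Then g does NOT lie in any solvable normal subgroup of G if and only if there exist an integer n ≥ 1 and elements x₁, …, x_n ∈ G such that the subgroup of G generated by ⁅g,x₁⁆, …, ⁅g,x_n⁆ is not solvable. -/

import Mathlib

open scoped commutatorElement

/-- In a finite group `G`, an element `g` lies in no solvable normal subgroup of `G`
iff there exist `n ≥ 1` and `x₁, …, xₙ ∈ G` such that the subgroup generated by
`⁅g,x₁⁆, …, ⁅g,xₙ⁆` is not solvable. -/
theorem not_mem_solvable_radical_iff {G : Type*} [Group G] [Finite G] (g : G) :
    (¬ ∃ N : Subgroup G, N.Normal ∧ IsSolvable N ∧ g ∈ N) ↔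
      ∃ (n : ℕ), 1 ≤ n ∧ ∃ x : Fin n → G,
        ¬ IsSolvable (Subgroup.closure (Set.range fun i : Fin n => ⁅g, x i⁆)) := by
  constructor
  · -- forward, by contrapositive
    intro h
    by_contra hc
    push_neg at hc
    apply h
    -- K: subgroup generated by all commutators ⁅g, y⁆
    set S : Set G := Set.range fun y : G => ⁅g, y⁆ with hS
    set K : Subgroup G := Subgroup.closure S with hK
    have hGpos : 1 ≤ Nat.card G := Nat.card_pos (α := G)
    have hKsol : IsSolvable K := by
      have e := (Finite.equivFin G).symm
      have hrange : (Set.range fun i : Fin (Nat.card G) => ⁅g, e i⁆) = S := by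
        rw [hS]
        have : (fun i : Fin (Nat.card G) => ⁅g, e i⁆) = (fun y : G => ⁅g, y⁆) ∘ e := rfl
        rw [this, Set.range_comp, Set.range_eq_univ.mpr e.surjective, Set.image_univ]
      have := hc (Nat.card G) hGpos e
      rwa [hrange] at this
    -- g normalizes K
    have hconj : ∀ z : G, (∀ y ∈ S, z * y * z⁻¹ ∈ S) → ∀ k ∈ K, z * k * z⁻¹ ∈ K := by
      intro z hz k hk
      refine Subgroup.closure_induction (p := fun k _ => z * k * z⁻¹ ∈ K)
        (fun x hx => Subgroup.subset_closure (hz x hx)) (by simpa using K.one_mem) ?_ ?_ hk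
      · intro x y _ _ ihx ihy
        have : z * (x * y) * z⁻¹ = (z * x * z⁻¹) * (z * y * z⁻¹) := by group
        rw [this]; exact mul_mem ihx ihy
      · intro x _ ihx
        have : z * x⁻¹ * z⁻¹ = (z * x * z⁻¹)⁻¹ := by group
        rw [this]; exact inv_mem ihx
    have hgK : ∀ k ∈ K, g * k * g⁻¹ ∈ K := by
      refine hconj g ?_
      rintro y ⟨w, rfl⟩
      exact ⟨g * w * g⁻¹, by group⟩
    have hginvK : ∀ k ∈ K, g⁻¹ * k * g ∈ K := by
      have := hconj g⁻¹ ?_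
      · simpa using this
      rintro y ⟨w, rfl⟩
      exact ⟨g⁻¹ * w * g, by group⟩
    -- N' = closure (K ∪ {g})
    set N' : Subgroup G := Subgroup.closure (↑K ∪ {g}) with hN'
    have hKN' : K ≤ N' := by
      intro k hk
      exact Subgroup.subset_closure (Or.inl hk)
    have hgN' : g ∈ N' := Subgroup.subset_closure (Or.inr rfl)
    -- every element of N' conjugates K into K
    have hnorm : ∀ x ∈ N', ∀ k, k ∈ K ↔ x * k * x⁻¹ ∈ K := by
      intro x hx
      refine Subgroup.closure_induction (p := fun x _ => ∀ k, k ∈ K ↔ x * k * x⁻¹ ∈ K)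
        ?_ (by simp) ?_ ?_ hx
      · rintro x (hxK | hxg)
        · intro k
          constructor
          · intro hk; exact mul_mem (mul_mem hxK hk) (inv_mem hxK)
          · intro hk
            have : k = x⁻¹ * (x * k * x⁻¹) * x := by group
            rw [this]
            exact mul_mem (mul_mem (inv_mem hxK) hk) hxK
        · rw [Set.mem_singleton_iff] at hxg
          rw [hxg]
          intro k
          constructor
          · exact hgK k
          · intro hk
            have : k = g⁻¹ * (g * k * g⁻¹) * g := by group
            rw [this]
            exact hginvK _ hk
      · intro x y _ _ ihx ihy k
        rw [ihy k, ihx (y * k * y⁻¹)]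
        constructor <;> intro h2
        · have : x * y * k * (x * y)⁻¹ = x * (y * k * y⁻¹) * x⁻¹ := by group
          rw [this]; exact h2
        · have : x * (y * k * y⁻¹) * x⁻¹ = x * y * k * (x * y)⁻¹ := by group
          rw [this]; exact h2
      · intro x _ ihx k
        simp only [inv_inv]
        rw [ihx (x⁻¹ * k * x)]
        constructor <;> intro h2
        · have : x * (x⁻¹ * k * x) * x⁻¹ = k := by group
          rwa [← this] at h2
        · have : x * (x⁻¹ * k * x) * x⁻¹ = k := by group
          rwa [this] at h2
    -- K as subgroup of N' is normal
    set K'' : Subgroup N' := K.subgroupOf N' with hK''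
    have hK''normal : K''.Normal := by
      constructor
      intro n hn x
      have hn' : (n : G) ∈ K := hn
      show ((x * n * x⁻¹ : N') : G) ∈ K
      have : ((x * n * x⁻¹ : N') : G) = (x : G) * (n : G) * (x : G)⁻¹ := rfl
      rw [this]
      exact (hnorm x x.2 n).mp hn'
    have hK''sol : IsSolvable K'' := by
      haveI : Group.IsSolvable ↥K := hKsol
      exact solvable_of_solvable_injective (f := (Subgroup.subgroupOfEquivOfLe hKN').toMonoidHom)
        (Subgroup.subgroupOfEquivOfLe hKN').injective
    -- the quotient N' / K'' is generated by the image of g, hence abelian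
    have hQsol : IsSolvable (N' ⧸ K'') := by
      set f := QuotientGroup.mk' K'' with hf
      set c := f ⟨g, hgN'⟩ with hcdef
      have hgen : ∀ q : (N' ⧸ K''), q ∈ Subgroup.zpowers c := by
        intro q
        obtain ⟨x, rfl⟩ := QuotientGroup.mk'_surjective K'' q
        obtain ⟨x, hx⟩ := x
        refine Subgroup.closure_induction
          (p := fun x hx => f ⟨x, hx⟩ ∈ Subgroup.zpowers c) ?_ ?_ ?_ ?_ hx
        · intro x hxmem
          rcases hxmem with hxK | hxg
          · show f ⟨x, _⟩ ∈ Subgroup.zpowers c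
            have h1 : f ⟨x, Subgroup.subset_closure (Or.inl hxK)⟩ = 1 := by
              rw [hf, ← MonoidHom.mem_ker, QuotientGroup.ker_mk']
              exact hxK
            rw [h1]; exact one_mem _
          · rw [Set.mem_singleton_iff] at hxg
            show f ⟨x, _⟩ ∈ Subgroup.zpowers c
            refine ⟨1, ?_⟩
            show c ^ (1 : ℤ) = f ⟨x, _⟩
            rw [zpow_one, hcdef]
            congr 1
            exact Subtype.ext hxg.symm
        · show f ⟨1, _⟩ ∈ Subgroup.zpowers c
          rw [show (⟨(1:G), Subgroup.one_mem _⟩ : N') = (1 : N') from rfl, map_one]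
          exact one_mem _
        · intro x y hxm hym ihx ihy
          show f ⟨x * y, _⟩ ∈ Subgroup.zpowers c
          rw [show (⟨x * y, mul_mem hxm hym⟩ : N') = ⟨x, hxm⟩ * ⟨y, hym⟩ from rfl, map_mul]
          exact mul_mem ihx ihy
        · intro x hxm ihx
          show f ⟨x⁻¹, _⟩ ∈ Subgroup.zpowers c
          rw [show (⟨x⁻¹, inv_mem hxm⟩ : N') = (⟨x, hxm⟩ : N')⁻¹ from rfl, map_inv]
          exact inv_mem ihx
      apply isSolvable_of_comm
      intro a b
      obtain ⟨i, hi⟩ := hgen a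
      obtain ⟨j, hj⟩ := hgen b
      rw [← hi, ← hj, ← zpow_add, ← zpow_add, add_comm]
    haveI : Group.IsSolvable ↥K'' := hK''sol
    haveI : Group.IsSolvable (↥N' ⧸ K'') := hQsol
    have hN'sol : IsSolvable N' :=
      solvable_of_ker_le_range K''.subtype (QuotientGroup.mk' K'')
        (by rw [QuotientGroup.ker_mk', Subgroup.range_subtype])
    -- the normal closure of {g} is contained in N'
    have hNC : Subgroup.normalClosure {g} ≤ N' := by
      rw [Subgroup.normalClosure]
      apply Subgroup.closure_le _ |>.mpr
      intro y hy
      rw [Group.mem_conjugatesOfSet_iff] at hy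
      obtain ⟨a, ha, hconj'⟩ := hy
      rw [Set.mem_singleton_iff] at ha
      rw [ha] at hconj'
      obtain ⟨x, rfl⟩ := isConj_iff.mp hconj'
      have : x * g * x⁻¹ = ⁅g, x⁆⁻¹ * g := by group
      rw [this]
      exact mul_mem (inv_mem (hKN' (Subgroup.subset_closure ⟨x, rfl⟩))) hgN'
    refine ⟨Subgroup.normalClosure {g}, inferInstance, ?_, Subgroup.subset_normalClosure rfl⟩
    haveI : Group.IsSolvable ↥N' := hN'sol
    exact solvable_of_solvable_injective (Subgroup.inclusion_injective hNC)
  · -- backward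
    rintro ⟨n, hn, x, hns⟩ ⟨N, hNnormal, hNsol, hgN⟩
    apply hns
    have hle : Subgroup.closure (Set.range fun i : Fin n => ⁅g, x i⁆) ≤ N := by
      apply Subgroup.closure_le _ |>.mpr
      rintro y ⟨i, rfl⟩
      show ⁅g, x i⁆ ∈ N
      have : ⁅g, x i⁆ = g * (x i * g⁻¹ * (x i)⁻¹) := by group
      rw [this]
      exact mul_mem hgN (hNnormal.conj_mem g⁻¹ (inv_mem hgN) (x i))
    haveI : Group.IsSolvable ↥N := hNsol
    exact solvable_of_solvable_injective (Subgroup.inclusion_injective hle)
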